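/- Let φ be a 3SAT instance with n variables and m clauses, each clause containing exactly 3 distinct variables, and let Z := {(i,j) ∈ [m]×[n] : variable x_j occurs in clause C_i}. Then for all integers 1 ≤ k ≤ m and 1 ≤ ℓ ≤ n, ω(G_φ^{k×ℓ}) ≤ Pr[(I×J) ∩ Z = ∅] + (3kℓ/n)·ω(G_φ), where I is a uniformly random k-element subset of [m] and J is an independent uniformly random ℓ-element subset of [n]. -/

import Mathlib

open Finset

/-- A 3SAT clause over `n` variables: three distinct variable indices together with
three negation signs.  The `t`-th literal is satisfied by an assignment `x` iff
`x (var t) ≠ neg t`. -/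
structure Clause3 (n : ℕ) where
  var : Fin 3 → Fin n
  neg : Fin 3 → Bool
  inj : Function.Injective var

/-- The clause is satisfied by the (global) assignment `x`. -/
def Clause3.satBy {n : ℕ} (C : Clause3 n) (x : Fin n → Bool) : Prop :=
  ∃ t : Fin 3, x (C.var t) ≠ C.neg t

/-- The clause is satisfied by a local assignment `α` to its three variables
(indexed by position). -/
def Clause3.satLocal {n : ℕ} (C : Clause3 n) (α : Fin 3 → Bool) : Prop :=
  ∃ t : Fin 3, α t ≠ C.neg t

instance {n : ℕ} (C : Clause3 n) (x : Fin n → Bool) : Decidable (C.satBy x) := by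
  unfold Clause3.satBy; infer_instance

instance {n : ℕ} (C : Clause3 n) (α : Fin 3 → Bool) : Decidable (C.satLocal α) := by
  unfold Clause3.satLocal; infer_instance

/-- `Z`: the set of (clause index, variable index) incidence pairs of `φ`. -/
def Zset {n m : ℕ} (φ : Fin m → Clause3 n) : Finset (Fin m × Fin n) :=
  univ.filter fun p => ∃ t : Fin 3, (φ p.1).var t = p.2

/-- The value of the clause/variable game `G_φ`. -/
noncomputable def cvVal {n m : ℕ} (φ : Fin m → Clause3 n) : ℝ :=
  ⨆ a : Fin m → Fin 3 → Bool, ⨆ b : Fin n → Bool,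
    (∑ i : Fin m, ∑ t : Fin 3,
        if (φ i).satLocal (a i) ∧ a i t = b ((φ i).var t) then (1 : ℝ) else 0) /
      (3 * (m : ℝ))

/-- The winning predicate of the birthday repetition game `G_φ^{k×ℓ}`:
for all `i ∈ I` and `j ∈ J` such that variable `j` occurs in clause `i`,
Merlin₁'s assignment to clause `i` satisfies it and agrees with Merlin₂'s
bit for variable `j`. -/
def bdWin {n m : ℕ} (φ : Fin m → Clause3 n) (I : Finset (Fin m)) (J : Finset (Fin n))
    (a : Fin m → Fin 3 → Bool) (b : Fin n → Bool) : Prop :=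
  ∀ i ∈ I, ∀ j ∈ J, ∀ t : Fin 3, (φ i).var t = j →
    ((φ i).satLocal (a i) ∧ a i t = b j)

instance {n m : ℕ} (φ : Fin m → Clause3 n) (I : Finset (Fin m)) (J : Finset (Fin n))
    (a : Fin m → Fin 3 → Bool) (b : Fin n → Bool) : Decidable (bdWin φ I J a b) := by
  unfold bdWin; infer_instance

/-- The value of the birthday repetition game `G_φ^{k×ℓ}`: Arthur sends a uniformly
random `k`-subset `I` of clause indices to Merlin₁ and, independently, a uniformly
random `ℓ`-subset `J` of variable indices to Merlin₂; their (deterministic)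
strategies answer with assignments to the clauses in `I`, resp. bits for the
variables in `J`. -/
noncomputable def bdVal {n m : ℕ} (φ : Fin m → Clause3 n) (k ℓ : ℕ) : ℝ :=
  ⨆ a : Finset (Fin m) → Fin m → Fin 3 → Bool, ⨆ b : Finset (Fin n) → Fin n → Bool,
    (∑ I ∈ (univ : Finset (Fin m)).powersetCard k,
        ∑ J ∈ (univ : Finset (Fin n)).powersetCard ℓ,
          if bdWin φ I J (a I) (b J) then (1 : ℝ) else 0) /
      ((((univ : Finset (Fin m)).powersetCard k).card : ℝ) *
        (((univ : Finset (Fin n)).powersetCard ℓ).card : ℝ))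

/-- The probability that the pair `(I, J)` is produced by the correlated
distribution `D`: choose `(i,j)` uniformly from `Z`, then `I` uniformly among
`k`-subsets of `[m]` containing `i` and, independently, `J` uniformly among
`ℓ`-subsets of `[n]` containing `j`. -/
noncomputable def prD {n m : ℕ} (φ : Fin m → Clause3 n) (k ℓ : ℕ)
    (I : Finset (Fin m)) (J : Finset (Fin n)) : ℝ :=
  (∑ p ∈ Zset φ,
      if p.1 ∈ I ∧ p.2 ∈ J then
        (1 : ℝ) /
          ((((((univ : Finset (Fin m)).powersetCard k).filter fun I' => p.1 ∈ I').card : ℝ)) *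
            (((((univ : Finset (Fin n)).powersetCard ℓ).filter fun J' => p.2 ∈ J').card : ℝ)))
      else 0) / ((Zset φ).card : ℝ)

/-- The probability that the pair `(I, J)` is produced by the uniform
distribution `U` on pairs of a `k`-subset of `[m]` and an `ℓ`-subset of `[n]`. -/
noncomputable def prU (m n k ℓ : ℕ) : ℝ :=
  1 / ((((univ : Finset (Fin m)).powersetCard k).card : ℝ) *
    (((univ : Finset (Fin n)).powersetCard ℓ).card : ℝ))


/-! ### Auxiliary machinery -/

lemma sum_piFinset_eval {ι α : Type*} [Fintype ι] [DecidableEq ι] [DecidableEq α]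
    (s : ι → Finset α) (i : ι) (F : α → ℝ) :
    ∑ g ∈ Fintype.piFinset s, F (g i) =
      (∏ j ∈ univ.erase i, ((s j).card : ℝ)) * ∑ x ∈ s i, F x := by
  classical
  have h := Finset.prod_univ_sum s (fun j x => if j = i then F x else (1:ℝ))
  have h2 : ∀ g ∈ Fintype.piFinset s, (∏ j, if j = i then F (g j) else (1:ℝ)) = F (g i) := by
    intro g _
    rw [Finset.prod_eq_single i (fun b _ hb => if_neg hb)
      (fun hni => absurd (Finset.mem_univ i) hni), if_pos rfl]
  rw [Finset.sum_congr rfl h2] at h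
  rw [← Finset.mul_prod_erase univ _ (Finset.mem_univ i)] at h
  have h3 : ∀ j ∈ univ.erase i, (∑ x ∈ s j, if j = i then F x else (1:ℝ)) = ((s j).card : ℝ) := by
    intro j hj
    have hne : j ≠ i := (Finset.mem_erase.mp hj).1
    simp [hne]
  rw [Finset.prod_congr rfl h3] at h
  simp only [if_true] at h
  rw [← h]
  ring

lemma card_filt {α : Type*} [Fintype α] [DecidableEq α] (k : ℕ) (hk : 1 ≤ k) (i : α) :
    (((univ : Finset α).powersetCard k).filter fun I => i ∈ I).card =
      (Fintype.card α - 1).choose (k - 1) := by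
  have h : (((univ : Finset α).powersetCard k).filter fun I => i ∈ I).card
      = ((univ.erase i).powersetCard (k-1)).card := by
    apply Finset.card_nbij' (fun I => I.erase i) (fun s => insert i s)
    · intro I hI
      simp only [Finset.mem_coe, Finset.mem_powersetCard, Finset.mem_filter, Finset.mem_powersetCard] at hI ⊢
      obtain ⟨⟨hsub, hcard⟩, hi⟩ := hI
      refine ⟨fun x hx => ?_, by rw [Finset.card_erase_of_mem hi, hcard]⟩
      simp only [Finset.mem_erase] at hx ⊢
      exact ⟨hx.1, Finset.mem_univ x⟩
    · intro s hs
      simp only [Finset.mem_coe, Finset.mem_powersetCard, Finset.mem_filter] at hs ⊢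
      obtain ⟨hsub, hcard⟩ := hs
      have hi : i ∉ s := fun h => (Finset.mem_erase.mp (hsub h)).1 rfl
      refine ⟨⟨Finset.subset_univ _, ?_⟩, Finset.mem_insert_self i s⟩
      rw [Finset.card_insert_of_notMem hi, hcard]
      omega
    · intro I hI
      simp only [Finset.mem_coe, Finset.mem_filter] at hI
      exact Finset.insert_erase hI.2
    · intro s hs
      simp only [Finset.mem_coe, Finset.mem_powersetCard] at hs
      have hi : i ∉ s := fun h => (Finset.mem_erase.mp (hs.1 h)).1 rfl
      exact Finset.erase_insert hi
  rw [h, Finset.card_powersetCard, Finset.card_erase_of_mem (Finset.mem_univ i),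
    Finset.card_univ]

lemma sum_comm4 {α β γ δ : Type*} (s : Finset α) (t : Finset β) (u : Finset γ) (v : Finset δ)
    (f : α → β → γ → δ → ℝ) :
    ∑ x ∈ s, ∑ y ∈ t, ∑ c ∈ u, ∑ d ∈ v, f x y c d
      = ∑ c ∈ u, ∑ d ∈ v, ∑ x ∈ s, ∑ y ∈ t, f x y c d := by
  calc ∑ x ∈ s, ∑ y ∈ t, ∑ c ∈ u, ∑ d ∈ v, f x y c d
      = ∑ x ∈ s, ∑ c ∈ u, ∑ y ∈ t, ∑ d ∈ v, f x y c d :=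
        Finset.sum_congr rfl fun x _ => Finset.sum_comm
    _ = ∑ c ∈ u, ∑ x ∈ s, ∑ y ∈ t, ∑ d ∈ v, f x y c d := Finset.sum_comm
    _ = ∑ c ∈ u, ∑ x ∈ s, ∑ d ∈ v, ∑ y ∈ t, f x y c d :=
        Finset.sum_congr rfl fun c _ => Finset.sum_congr rfl fun x _ => Finset.sum_comm
    _ = ∑ c ∈ u, ∑ d ∈ v, ∑ x ∈ s, ∑ y ∈ t, f x y c d :=
        Finset.sum_congr rfl fun c _ => Finset.sum_comm

/-- The indicator of the clause/variable game being won at question `(i,t)`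
with answers `A i` and `B ((φ i).var t)`. -/
noncomputable def cvTerm {n m : ℕ} (φ : Fin m → Clause3 n) (A : Fin m → Fin 3 → Bool)
    (B : Fin n → Bool) (i : Fin m) (t : Fin 3) : ℝ :=
  if (φ i).satLocal (A i) ∧ A i t = B ((φ i).var t) then 1 else 0

lemma cvTerm_nonneg {n m : ℕ} (φ : Fin m → Clause3 n) (A : Fin m → Fin 3 → Bool)
    (B : Fin n → Bool) (i : Fin m) (t : Fin 3) : 0 ≤ cvTerm φ A B i t := by
  unfold cvTerm; positivity

lemma sum_cvTerm_le {n m : ℕ} (φ : Fin m → Clause3 n) (hm : 0 < m)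
    (A : Fin m → Fin 3 → Bool) (B : Fin n → Bool) :
    ∑ i : Fin m, ∑ t : Fin 3, cvTerm φ A B i t ≤ 3 * m * cvVal φ := by
  have hpos : (0:ℝ) < 3 * m := by positivity
  have hle : (∑ i : Fin m, ∑ t : Fin 3, cvTerm φ A B i t) / (3 * (m:ℝ)) ≤ cvVal φ := by
    have h1 := le_ciSup (f := fun b : Fin n → Bool =>
        (∑ i : Fin m, ∑ t : Fin 3,
          if (φ i).satLocal (A i) ∧ A i t = b ((φ i).var t) then (1 : ℝ) else 0) /
        (3 * (m : ℝ))) (Set.Finite.bddAbove (Set.finite_range _)) B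
    have h2 := le_ciSup (f := fun a : Fin m → Fin 3 → Bool =>
        ⨆ b : Fin n → Bool,
        (∑ i : Fin m, ∑ t : Fin 3,
          if (φ i).satLocal (a i) ∧ a i t = b ((φ i).var t) then (1 : ℝ) else 0) /
        (3 * (m : ℝ))) (Set.Finite.bddAbove (Set.finite_range _)) A
    calc (∑ i : Fin m, ∑ t : Fin 3, cvTerm φ A B i t) / (3 * (m:ℝ))
        = (∑ i : Fin m, ∑ t : Fin 3,
          if (φ i).satLocal (A i) ∧ A i t = B ((φ i).var t) then (1 : ℝ) else 0) /
          (3 * (m : ℝ)) := rfl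
      _ ≤ _ := h1
      _ ≤ cvVal φ := h2
  calc ∑ i : Fin m, ∑ t : Fin 3, cvTerm φ A B i t
      = ((∑ i : Fin m, ∑ t : Fin 3, cvTerm φ A B i t) / (3 * (m:ℝ))) * (3 * m) := by
        field_simp
    _ ≤ cvVal φ * (3 * m) := by
        exact mul_le_mul_of_nonneg_right hle (le_of_lt hpos)
    _ = 3 * m * cvVal φ := by ring

lemma avg_le {n m : ℕ} (φ : Fin m → Clause3 n) (k ℓ : ℕ) (hk1 : 1 ≤ k) (hkm : k ≤ m)
    (hl1 : 1 ≤ ℓ) (hln : ℓ ≤ n)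
    (a : Finset (Fin m) → Fin m → Fin 3 → Bool) (b : Finset (Fin n) → Fin n → Bool) :
    ∑ i : Fin m, ∑ t : Fin 3,
        ∑ I ∈ ((univ : Finset (Fin m)).powersetCard k).filter (fun I => i ∈ I),
          ∑ J ∈ ((univ : Finset (Fin n)).powersetCard ℓ).filter (fun J => (φ i).var t ∈ J),
            cvTerm φ (a I) (b J) i t
      ≤ (((m-1).choose (k-1) : ℝ)) * (((n-1).choose (ℓ-1) : ℝ)) * (3 * m * cvVal φ) := by
  classical
  have hm : 0 < m := lt_of_lt_of_le hk1 hkm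
  have hn : 0 < n := lt_of_lt_of_le hl1 hln
  set N := (m-1).choose (k-1) with hNdef
  set M := (n-1).choose (ℓ-1) with hMdef
  set SI : Fin m → Finset (Finset (Fin m)) :=
    fun i => ((univ : Finset (Fin m)).powersetCard k).filter (fun I => i ∈ I) with hSI
  set SJ : Fin n → Finset (Finset (Fin n)) :=
    fun j => ((univ : Finset (Fin n)).powersetCard ℓ).filter (fun J => j ∈ J) with hSJ
  have hcardI : ∀ i, (SI i).card = N := by
    intro i; simpa using card_filt k hk1 i
  have hcardJ : ∀ j, (SJ j).card = M := by
    intro j; simpa using card_filt ℓ hl1 j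
  have hN : 0 < N := Nat.choose_pos (by omega)
  have hM : 0 < M := Nat.choose_pos (by omega)
  -- inner swap for a fixed question (i,t)
  have swap : ∀ (i : Fin m) (t : Fin 3),
      ∑ g ∈ Fintype.piFinset SI, ∑ h ∈ Fintype.piFinset SJ,
          cvTerm φ (fun i' => a (g i') i') (fun j' => b (h j') j') i t
        = ((N:ℝ))^(m-1) * ((M:ℝ))^(n-1) *
            ∑ I ∈ SI i, ∑ J ∈ SJ ((φ i).var t), cvTerm φ (a I) (b J) i t := by
    intro i t
    have step1 : ∀ g : Fin m → Finset (Fin m),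
        ∑ h ∈ Fintype.piFinset SJ,
            cvTerm φ (fun i' => a (g i') i') (fun j' => b (h j') j') i t
          = ((M:ℝ))^(n-1) * ∑ J ∈ SJ ((φ i).var t), cvTerm φ (a (g i)) (b J) i t := by
      intro g
      have he := sum_piFinset_eval SJ ((φ i).var t)
        (fun J => cvTerm φ (a (g i)) (b J) i t)
      have hcongr : ∀ h ∈ Fintype.piFinset SJ,
          cvTerm φ (fun i' => a (g i') i') (fun j' => b (h j') j') i t
            = cvTerm φ (a (g i)) (b (h ((φ i).var t))) i t := by
        intro h _; rfl
      rw [Finset.sum_congr rfl hcongr, he]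
      congr 1
      rw [Finset.prod_congr rfl (fun j hj => by rw [hcardJ j]), Finset.prod_const,
        Finset.card_erase_of_mem (Finset.mem_univ _), Finset.card_univ, Fintype.card_fin]
    have step2 :
        ∑ g ∈ Fintype.piFinset SI,
            ∑ J ∈ SJ ((φ i).var t), cvTerm φ (a (g i)) (b J) i t
          = ((N:ℝ))^(m-1) * ∑ I ∈ SI i, ∑ J ∈ SJ ((φ i).var t), cvTerm φ (a I) (b J) i t := by
      have he := sum_piFinset_eval SI i
        (fun I => ∑ J ∈ SJ ((φ i).var t), cvTerm φ (a I) (b J) i t)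
      rw [he]
      congr 1
      rw [Finset.prod_congr rfl (fun j hj => by rw [hcardI j]), Finset.prod_const,
        Finset.card_erase_of_mem (Finset.mem_univ _), Finset.card_univ, Fintype.card_fin]
    calc ∑ g ∈ Fintype.piFinset SI, ∑ h ∈ Fintype.piFinset SJ,
            cvTerm φ (fun i' => a (g i') i') (fun j' => b (h j') j') i t
        = ∑ g ∈ Fintype.piFinset SI,
            ((M:ℝ))^(n-1) * ∑ J ∈ SJ ((φ i).var t), cvTerm φ (a (g i)) (b J) i t :=
          Finset.sum_congr rfl fun g _ => step1 g
      _ = ((M:ℝ))^(n-1) * ∑ g ∈ Fintype.piFinset SI,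
            ∑ J ∈ SJ ((φ i).var t), cvTerm φ (a (g i)) (b J) i t := by
          rw [Finset.mul_sum]
      _ = ((M:ℝ))^(n-1) * (((N:ℝ))^(m-1) *
            ∑ I ∈ SI i, ∑ J ∈ SJ ((φ i).var t), cvTerm φ (a I) (b J) i t) := by
          rw [step2]
      _ = _ := by ring
  -- total bound over the product space
  have total : ∑ g ∈ Fintype.piFinset SI, ∑ h ∈ Fintype.piFinset SJ,
      (∑ i : Fin m, ∑ t : Fin 3,
          cvTerm φ (fun i' => a (g i') i') (fun j' => b (h j') j') i t)
      ≤ ((N:ℝ))^m * ((M:ℝ))^n * (3 * m * cvVal φ) := by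
    have hb : ∀ g ∈ Fintype.piFinset SI, ∀ h ∈ Fintype.piFinset SJ,
        (∑ i : Fin m, ∑ t : Fin 3,
            cvTerm φ (fun i' => a (g i') i') (fun j' => b (h j') j') i t)
          ≤ 3 * m * cvVal φ := fun g _ h _ => sum_cvTerm_le φ hm _ _
    calc ∑ g ∈ Fintype.piFinset SI, ∑ h ∈ Fintype.piFinset SJ,
        (∑ i : Fin m, ∑ t : Fin 3,
            cvTerm φ (fun i' => a (g i') i') (fun j' => b (h j') j') i t)
        ≤ ∑ g ∈ Fintype.piFinset SI, ∑ h ∈ Fintype.piFinset SJ, (3 * m * cvVal φ) :=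
          Finset.sum_le_sum fun g hg => Finset.sum_le_sum fun h hh => hb g hg h hh
      _ = ((Fintype.piFinset SI).card : ℝ) * ((Fintype.piFinset SJ).card : ℝ)
            * (3 * m * cvVal φ) := by
          rw [Finset.sum_const, Finset.sum_const]
          simp [nsmul_eq_mul]; ring
      _ = ((N:ℝ))^m * ((M:ℝ))^n * (3 * m * cvVal φ) := by
          rw [Fintype.card_piFinset, Fintype.card_piFinset]
          simp only [hcardI, hcardJ]
          push_cast
          simp [Finset.prod_const, Finset.card_univ]
  -- reorganize the LHS of `total`
  have reorg : ∑ g ∈ Fintype.piFinset SI, ∑ h ∈ Fintype.piFinset SJ,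
      (∑ i : Fin m, ∑ t : Fin 3,
          cvTerm φ (fun i' => a (g i') i') (fun j' => b (h j') j') i t)
      = ((N:ℝ))^(m-1) * ((M:ℝ))^(n-1) *
          ∑ i : Fin m, ∑ t : Fin 3,
            ∑ I ∈ SI i, ∑ J ∈ SJ ((φ i).var t), cvTerm φ (a I) (b J) i t := by
    rw [sum_comm4]
    rw [Finset.mul_sum]
    refine Finset.sum_congr rfl fun i _ => ?_
    rw [Finset.mul_sum]
    exact Finset.sum_congr rfl fun t _ => swap i t
  rw [reorg] at total
  have hpow : (0:ℝ) < ((N:ℝ))^(m-1) * ((M:ℝ))^(n-1) := by positivity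
  have := le_of_mul_le_mul_left (by
    calc ((N:ℝ))^(m-1) * ((M:ℝ))^(n-1) *
          (∑ i : Fin m, ∑ t : Fin 3,
            ∑ I ∈ SI i, ∑ J ∈ SJ ((φ i).var t), cvTerm φ (a I) (b J) i t)
        ≤ ((N:ℝ))^m * ((M:ℝ))^n * (3 * m * cvVal φ) := total
      _ = ((N:ℝ))^(m-1) * ((M:ℝ))^(n-1) * ((N:ℝ) * (M:ℝ) * (3 * m * cvVal φ)) := by
          have e1 : ((N:ℝ))^m = ((N:ℝ))^(m-1) * (N:ℝ) := by
            rw [← pow_succ]; congr 1; omega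
          have e2 : ((M:ℝ))^n = ((M:ℝ))^(n-1) * (M:ℝ) := by
            rw [← pow_succ]; congr 1; omega
          rw [e1, e2]; ring) hpow
  exact this

lemma ite_nonneg' {P : Prop} [Decidable P] {x : ℝ} (hx : 0 ≤ x) :
    0 ≤ if P then x else 0 := by
  split
  · exact hx
  · exact le_rfl

/-- The value of the birthday repetition game is at most the probability that the
random rectangle `I × J` misses the incidence set `Z`, plus `(3kℓ/n)` times the
value of the clause/variable game. -/
theorem bdVal_le_miss_prob_add {n m : ℕ} (φ : Fin m → Clause3 n) (k ℓ : ℕ)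
    (hk1 : 1 ≤ k) (hkm : k ≤ m) (hl1 : 1 ≤ ℓ) (hln : ℓ ≤ n) :
    bdVal φ k ℓ ≤
      (((((univ : Finset (Fin m)).powersetCard k) ×ˢ
            ((univ : Finset (Fin n)).powersetCard ℓ)).filter
          fun p => (p.1 ×ˢ p.2) ∩ Zset φ = ∅).card : ℝ) /
        ((((univ : Finset (Fin m)).powersetCard k).card : ℝ) *
          (((univ : Finset (Fin n)).powersetCard ℓ).card : ℝ))
      + (3 * (k : ℝ) * ℓ / (n : ℝ)) * cvVal φ := by
  classical
  have hm : 0 < m := lt_of_lt_of_le hk1 hkm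
  have hn : 0 < n := lt_of_lt_of_le hl1 hln
  rw [bdVal]
  set Pk := (univ : Finset (Fin m)).powersetCard k with hPkdef
  set Pl := (univ : Finset (Fin n)).powersetCard ℓ with hPldef
  set N := (m-1).choose (k-1) with hNdef
  set M := (n-1).choose (ℓ-1) with hMdef
  have hKpos : 0 < Pk.card := by
    rw [hPkdef, Finset.card_powersetCard, Finset.card_univ, Fintype.card_fin]
    exact Nat.choose_pos hkm
  have hLpos : 0 < Pl.card := by
    rw [hPldef, Finset.card_powersetCard, Finset.card_univ, Fintype.card_fin]
    exact Nat.choose_pos hln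
  have hKL : (0:ℝ) < (Pk.card : ℝ) * (Pl.card : ℝ) := by
    have := hKpos; have := hLpos; positivity
  refine ciSup_le fun a => ciSup_le fun b => ?_
  -- the missing-rectangle set
  set miss := ((Pk ×ˢ Pl).filter fun p => (p.1 ×ˢ p.2) ∩ Zset φ = ∅) with hmiss
  -- pointwise bound on hit pairs
  have point : ∀ p ∈ (Pk ×ˢ Pl).filter (fun p => ¬((p.1 ×ˢ p.2) ∩ Zset φ = ∅)),
      (if bdWin φ p.1 p.2 (a p.1) (b p.2) then (1:ℝ) else 0)
        ≤ ∑ i : Fin m, ∑ t : Fin 3,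
            (if i ∈ p.1 ∧ (φ i).var t ∈ p.2 then cvTerm φ (a p.1) (b p.2) i t else 0) := by
    intro p hp
    rw [Finset.mem_filter] at hp
    by_cases hw : bdWin φ p.1 p.2 (a p.1) (b p.2)
    · rw [if_pos hw]
      obtain ⟨q, hq⟩ := Finset.nonempty_iff_ne_empty.mpr hp.2
      rw [Finset.mem_inter, Finset.mem_product] at hq
      obtain ⟨⟨hq1, hq2⟩, hqZ⟩ := hq
      have hZ : ∃ t : Fin 3, (φ q.1).var t = q.2 := by
        have := hqZ
        rw [Zset, Finset.mem_filter] at this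
        exact this.2
      obtain ⟨t, ht⟩ := hZ
      have hwin := hw q.1 hq1 q.2 hq2 t ht
      have hterm : (if q.1 ∈ p.1 ∧ (φ q.1).var t ∈ p.2 then
          cvTerm φ (a p.1) (b p.2) q.1 t else 0) = 1 := by
        rw [if_pos ⟨hq1, by rw [ht]; exact hq2⟩, cvTerm, if_pos]
        exact ⟨hwin.1, by rw [ht]; exact hwin.2⟩
      calc (1:ℝ) = (if q.1 ∈ p.1 ∧ (φ q.1).var t ∈ p.2 then
              cvTerm φ (a p.1) (b p.2) q.1 t else 0) := hterm.symm
        _ ≤ ∑ t' : Fin 3,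
              (if q.1 ∈ p.1 ∧ (φ q.1).var t' ∈ p.2 then
                cvTerm φ (a p.1) (b p.2) q.1 t' else 0) := by
            refine Finset.single_le_sum (f := fun t' : Fin 3 =>
              (if q.1 ∈ p.1 ∧ (φ q.1).var t' ∈ p.2 then
                cvTerm φ (a p.1) (b p.2) q.1 t' else 0)) (fun t' _ => ?_) (Finset.mem_univ t)
            exact ite_nonneg' (cvTerm_nonneg φ _ _ _ _)
        _ ≤ ∑ i : Fin m, ∑ t' : Fin 3,
              (if i ∈ p.1 ∧ (φ i).var t' ∈ p.2 then
                cvTerm φ (a p.1) (b p.2) i t' else 0) := by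
            refine Finset.single_le_sum (f := fun i : Fin m => ∑ t' : Fin 3,
              (if i ∈ p.1 ∧ (φ i).var t' ∈ p.2 then
                cvTerm φ (a p.1) (b p.2) i t' else 0)) (fun i _ => ?_) (Finset.mem_univ q.1)
            refine Finset.sum_nonneg fun t' _ => ?_
            exact ite_nonneg' (cvTerm_nonneg φ _ _ _ _)
    · rw [if_neg hw]
      refine Finset.sum_nonneg fun i _ => Finset.sum_nonneg fun t' _ => ?_
      exact ite_nonneg' (cvTerm_nonneg φ _ _ _ _)
  -- the numerator bound
  have numbound : (∑ I ∈ Pk, ∑ J ∈ Pl, if bdWin φ I J (a I) (b J) then (1:ℝ) else 0)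
      ≤ (miss.card : ℝ) + ((N:ℝ)) * ((M:ℝ)) * (3 * m * cvVal φ) := by
    have hsplit : (∑ I ∈ Pk, ∑ J ∈ Pl, if bdWin φ I J (a I) (b J) then (1:ℝ) else 0)
        = (∑ p ∈ miss, if bdWin φ p.1 p.2 (a p.1) (b p.2) then (1:ℝ) else 0)
          + ∑ p ∈ (Pk ×ˢ Pl).filter (fun p => ¬((p.1 ×ˢ p.2) ∩ Zset φ = ∅)),
              (if bdWin φ p.1 p.2 (a p.1) (b p.2) then (1:ℝ) else 0) := by
      rw [← Finset.sum_product', hmiss,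
        Finset.sum_filter_add_sum_filter_not (Pk ×ˢ Pl) _ _]
    rw [hsplit]
    have b1 : (∑ p ∈ miss, if bdWin φ p.1 p.2 (a p.1) (b p.2) then (1:ℝ) else 0)
        ≤ (miss.card : ℝ) := by
      calc (∑ p ∈ miss, if bdWin φ p.1 p.2 (a p.1) (b p.2) then (1:ℝ) else 0)
          ≤ ∑ p ∈ miss, (1:ℝ) := by
            refine Finset.sum_le_sum fun p _ => ?_
            split
            · exact le_rfl
            · norm_num
        _ = (miss.card : ℝ) := by rw [Finset.sum_const, nsmul_eq_mul, mul_one]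
    have b2 : (∑ p ∈ (Pk ×ˢ Pl).filter (fun p => ¬((p.1 ×ˢ p.2) ∩ Zset φ = ∅)),
          (if bdWin φ p.1 p.2 (a p.1) (b p.2) then (1:ℝ) else 0))
        ≤ ((N:ℝ)) * ((M:ℝ)) * (3 * m * cvVal φ) := by
      calc (∑ p ∈ (Pk ×ˢ Pl).filter (fun p => ¬((p.1 ×ˢ p.2) ∩ Zset φ = ∅)),
            (if bdWin φ p.1 p.2 (a p.1) (b p.2) then (1:ℝ) else 0))
          ≤ ∑ p ∈ (Pk ×ˢ Pl).filter (fun p => ¬((p.1 ×ˢ p.2) ∩ Zset φ = ∅)),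
              ∑ i : Fin m, ∑ t : Fin 3,
                (if i ∈ p.1 ∧ (φ i).var t ∈ p.2 then
                  cvTerm φ (a p.1) (b p.2) i t else 0) := Finset.sum_le_sum point
        _ ≤ ∑ p ∈ Pk ×ˢ Pl, ∑ i : Fin m, ∑ t : Fin 3,
              (if i ∈ p.1 ∧ (φ i).var t ∈ p.2 then
                cvTerm φ (a p.1) (b p.2) i t else 0) := by
            refine Finset.sum_le_sum_of_subset_of_nonneg (Finset.filter_subset _ _)
              fun p _ _ => ?_
            refine Finset.sum_nonneg fun i _ => Finset.sum_nonneg fun t _ => ?_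
            exact ite_nonneg' (cvTerm_nonneg φ _ _ _ _)
        _ = ∑ I ∈ Pk, ∑ J ∈ Pl, ∑ i : Fin m, ∑ t : Fin 3,
              (if i ∈ I ∧ (φ i).var t ∈ J then cvTerm φ (a I) (b J) i t else 0) := by
            exact Finset.sum_product (s := Pk) (t := Pl) (f := fun p => ∑ i : Fin m, ∑ t : Fin 3,
              (if i ∈ p.1 ∧ (φ i).var t ∈ p.2 then cvTerm φ (a p.1) (b p.2) i t else 0))
        _ = ∑ i : Fin m, ∑ t : Fin 3, ∑ I ∈ Pk, ∑ J ∈ Pl,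
              (if i ∈ I ∧ (φ i).var t ∈ J then cvTerm φ (a I) (b J) i t else 0) :=
            sum_comm4 _ _ _ _ _
        _ = ∑ i : Fin m, ∑ t : Fin 3,
              ∑ I ∈ Pk.filter (fun I => i ∈ I),
                ∑ J ∈ Pl.filter (fun J => (φ i).var t ∈ J),
                  cvTerm φ (a I) (b J) i t := by
            refine Finset.sum_congr rfl fun i _ => Finset.sum_congr rfl fun t _ => ?_
            rw [Finset.sum_filter]
            refine Finset.sum_congr rfl fun I _ => ?_
            by_cases hI : i ∈ I
            · simp only [hI, true_and, if_true]
              rw [Finset.sum_filter]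
            · simp [hI]
        _ ≤ ((N:ℝ)) * ((M:ℝ)) * (3 * m * cvVal φ) :=
            avg_le φ k ℓ hk1 hkm hl1 hln a b
    linarith
  -- coefficient identity
  have hknat : m * N = m.choose k * k := by
    have h := Nat.add_one_mul_choose_eq (m-1) (k-1)
    rw [show m - 1 + 1 = m from by omega, show k - 1 + 1 = k from by omega] at h
    exact h
  have hlnat : n * M = n.choose ℓ * ℓ := by
    have h := Nat.add_one_mul_choose_eq (n-1) (ℓ-1)
    rw [show n - 1 + 1 = n from by omega, show ℓ - 1 + 1 = ℓ from by omega] at h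
    exact h
  have hKcard : Pk.card = m.choose k := by
    rw [hPkdef, Finset.card_powersetCard, Finset.card_univ, Fintype.card_fin]
  have hLcard : Pl.card = n.choose ℓ := by
    rw [hPldef, Finset.card_powersetCard, Finset.card_univ, Fintype.card_fin]
  have h1 : (m:ℝ) * (N:ℝ) = (Pk.card : ℝ) * (k:ℝ) := by
    rw [hKcard]; exact_mod_cast congrArg (Nat.cast (R := ℝ)) hknat
  have h2 : (n:ℝ) * (M:ℝ) = (Pl.card : ℝ) * (ℓ:ℝ) := by
    rw [hLcard]; exact_mod_cast congrArg (Nat.cast (R := ℝ)) hlnat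
  have hn0 : (n:ℝ) ≠ 0 := Nat.cast_ne_zero.mpr hn.ne'
  have key : ((N:ℝ)) * ((M:ℝ)) * (3 * m * cvVal φ)
      = (3 * (k:ℝ) * ℓ / (n:ℝ) * cvVal φ) * ((Pk.card : ℝ) * (Pl.card : ℝ)) := by
    field_simp
    linear_combination (cvVal φ * ((n:ℝ) * (M:ℝ))) * h1
      + (cvVal φ * ((Pk.card:ℝ) * (k:ℝ))) * h2
  -- finish
  rw [div_le_iff₀ hKL]
  calc (∑ I ∈ Pk, ∑ J ∈ Pl, if bdWin φ I J (a I) (b J) then (1:ℝ) else 0)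
      ≤ (miss.card : ℝ) + ((N:ℝ)) * ((M:ℝ)) * (3 * m * cvVal φ) := numbound
    _ = (miss.card : ℝ) + (3 * (k:ℝ) * ℓ / (n:ℝ) * cvVal φ)
          * ((Pk.card : ℝ) * (Pl.card : ℝ)) := by rw [key]
    _ = ((miss.card : ℝ) / ((Pk.card : ℝ) * (Pl.card : ℝ))
          + 3 * (k:ℝ) * ℓ / (n:ℝ) * cvVal φ) * ((Pk.card : ℝ) * (Pl.card : ℝ)) := by
        field_simp
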